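/- In the agnostic setting, under the hypotheses of the ExpAT algorithm with parameters η ∈ (0,1), L > 1 and n ≤ ηLT/2^{k+1}, on any k-realizable sequence the number of false negatives satisfies M₋ ≤ (log₂ L)/η + k + 1 and the number of false positives satisfies M₊ ≤ 200ηT. -/

import Mathlib

open Finset

section ExpATAux


lemma two_rpow_le_one_add' {η : ℝ} (h0 : 0 ≤ η) (h1 : η ≤ 1) :
    (2:ℝ) ^ η ≤ 1 + η := by
  have h := Real.geom_mean_le_arith_mean2_weighted
    (by linarith : (0:ℝ) ≤ 1 - η) h0 zero_le_one (by norm_num : (0:ℝ) ≤ 2)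
    (by ring)
  rw [Real.one_rpow] at h
  linarith

lemma card_filter_succ' {T : ℕ} (P : Fin T → Prop) [DecidablePred P]
    (m : ℕ) (h : m < T) :
    (univ.filter (fun t : Fin T => t.val < m + 1 ∧ P t)).card
      = (univ.filter (fun t : Fin T => t.val < m ∧ P t)).card
        + (if P ⟨m, h⟩ then 1 else 0) := by
  split_ifs with hP
  · have he : (univ.filter (fun t : Fin T => t.val < m + 1 ∧ P t))
        = insert ⟨m, h⟩ (univ.filter (fun t : Fin T => t.val < m ∧ P t)) := by
      ext t
      simp only [mem_insert, mem_filter, mem_univ, true_and]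
      constructor
      · rintro ⟨h1, h2⟩
        rcases Nat.lt_succ_iff_lt_or_eq.mp h1 with h1 | h1
        · exact Or.inr ⟨h1, h2⟩
        · exact Or.inl (Fin.ext h1)
      · rintro (rfl | ⟨h1, h2⟩)
        · exact ⟨Nat.lt_succ_self m, hP⟩
        · exact ⟨Nat.lt_succ_of_lt h1, h2⟩
    rw [he, card_insert_of_notMem (by simp [mem_filter])]
  · have he : (univ.filter (fun t : Fin T => t.val < m + 1 ∧ P t))
        = (univ.filter (fun t : Fin T => t.val < m ∧ P t)) := by
      ext t
      simp only [mem_filter, mem_univ, true_and]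
      constructor
      · rintro ⟨h1, h2⟩
        rcases Nat.lt_succ_iff_lt_or_eq.mp h1 with h1 | h1
        · exact ⟨h1, h2⟩
        · exact absurd (show P ⟨m, h⟩ from (Fin.ext h1 : t = ⟨m,h⟩) ▸ h2) hP
      · rintro ⟨h1, h2⟩
        exact ⟨Nat.lt_succ_of_lt h1, h2⟩
    rw [he, add_zero]


theorem partA
    (n T k : ℕ) (η L : ℝ) (hη : η ∈ Set.Ioo (0 : ℝ) 1) (hL : 1 < L)
    (p : Fin T → Fin n → Bool) (y : Fin T → Bool)
    (hkreal : ∃ j : Fin n,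
      (Finset.univ.filter (fun t : Fin T => p t j ≠ y t)).card ≤ k)
    (V : ℕ → Finset (Fin n)) (dist : ℕ → Fin n → ℕ) (kb : ℕ → Fin n → ℕ)
    (hV0 : V 0 = Finset.univ) (hdist0 : ∀ j, dist 0 j = 0) (hkb0 : ∀ j, kb 0 j = k)
    (yhat : Fin T → Bool)
    (hyhat : ∀ t : Fin T, yhat t = true ↔
      L ≤ ∑ j ∈ (V t.val).filter (fun j => p t j = true),
            (2 : ℝ) ^ ((kb t.val j : ℝ) + η * dist t.val j))
    (hup1 : ∀ t : Fin T, yhat t = true →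
      (∀ j, dist (t.val + 1) j = dist t.val j) ∧
      (if y t = true then
          V (t.val + 1) = V t.val ∧ ∀ j, kb (t.val + 1) j = kb t.val j
        else
          V (t.val + 1) =
            (V t.val).filter (fun j => ¬(p t j = true ∧ kb t.val j = 0)) ∧
          ∀ j, kb (t.val + 1) j = kb t.val j - (if p t j = true then 1 else 0)))
    (hup0 : ∀ t : Fin T, yhat t = false →
      V (t.val + 1) = V t.val ∧ (∀ j, kb (t.val + 1) j = kb t.val j) ∧
      ∀ j, dist (t.val + 1) j = dist t.val j + (if p t j = true then 1 else 0)) :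
    ((Finset.univ.filter (fun t : Fin T => yhat t = false ∧ y t = true)).card : ℝ)
        ≤ Real.logb 2 L / η + k + 1 := by
  obtain ⟨hη0, hη1⟩ := hη
  obtain ⟨j, hj⟩ := hkreal
  have hL0 : (0:ℝ) < L := by linarith
  have hpos : ∀ m (j' : Fin n), (0:ℝ) < (2:ℝ) ^ ((kb m j' : ℝ) + η * dist m j') :=
    fun m j' => Real.rpow_pos_of_pos (by norm_num) _
  set E : ℕ → ℕ := fun m =>
    (univ.filter (fun t : Fin T => t.val < m ∧ p t j ≠ y t)).card with hE
  have hEk : ∀ m, E m ≤ k := by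
    intro m
    refine le_trans (card_le_card ?_) hj
    intro t ht
    simp only [mem_filter, mem_univ, true_and] at ht ⊢
    exact ht.2
  have hEmono : ∀ m, E m ≤ E (m+1) := by
    intro m; apply card_le_card; intro t ht
    simp only [mem_filter, mem_univ, true_and] at ht ⊢
    exact ⟨Nat.lt_succ_of_lt ht.1, ht.2⟩
  -- invariant: good expert stays alive with enough budget
  have hinv : ∀ m, m ≤ T → j ∈ V m ∧ k ≤ kb m j + E m := by
    intro m
    induction m with
    | zero =>
        intro _
        rw [hV0, hkb0]
        exact ⟨mem_univ j, by omega⟩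
    | succ m ih =>
        intro hm
        have hmT : m < T := hm
        obtain ⟨hjV, hkbE⟩ := ih (le_of_lt hmT)
        set t : Fin T := ⟨m, hmT⟩ with hts
        have hEm := hEmono m
        cases hy : yhat t with
        | false =>
            obtain ⟨hV', hkb', _⟩ := hup0 t hy
            have hV'' : V (m+1) = V m := hV'
            have hkb'' : kb (m+1) j = kb m j := hkb' j
            rw [hV'', hkb'']
            exact ⟨hjV, by omega⟩
        | true =>
            obtain ⟨hd', hrest⟩ := hup1 t hy
            cases hyy : y t with
            | true =>
                rw [hyy, if_pos rfl] at hrest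
                obtain ⟨hV', hkb'⟩ := hrest
                have hV'' : V (m+1) = V m := hV'
                have hkb'' : kb (m+1) j = kb m j := hkb' j
                rw [hV'', hkb'']
                exact ⟨hjV, by omega⟩
            | false =>
                rw [hyy, if_neg (by simp)] at hrest
                obtain ⟨hV', hkb'⟩ := hrest
                have hV'' : V (m+1) = (V m).filter (fun j' => ¬(p t j' = true ∧ kb m j' = 0)) := hV'
                have hkb'' : kb (m+1) j = kb m j - (if p t j = true then 1 else 0) := hkb' j
                cases hp : p t j with
                | false =>
                    rw [hp] at hkb''
                    simp only [Bool.false_eq_true, if_false, Nat.sub_zero] at hkb''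
                    refine ⟨?_, by omega⟩
                    rw [hV'', mem_filter]
                    exact ⟨hjV, by simp [hp]⟩
                | true =>
                    have hne : p t j ≠ y t := by simp [hp, hyy]
                    have hEs : E (m+1) = E m + 1 := by
                      have h := card_filter_succ' (fun t : Fin T => p t j ≠ y t) m hmT
                      rw [if_pos hne] at h
                      exact h
                    have hkb1 : 1 ≤ kb m j := by
                      have := hEk (m+1); omega
                    rw [hp, if_pos rfl] at hkb''
                    refine ⟨?_, by omega⟩
                    rw [hV'', mem_filter]
                    exact ⟨hjV, by simp [hp]; omega⟩
  -- distance monotonicity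
  have hdstep : ∀ (m : ℕ) (h : m < T) (j' : Fin n), dist m j' ≤ dist (m+1) j' := by
    intro m h j'
    set t : Fin T := ⟨m, h⟩
    cases hy : yhat t with
    | false =>
        obtain ⟨_, _, hd⟩ := hup0 t hy
        have hd' : dist (m+1) j' = dist m j' + (if p t j' = true then 1 else 0) := hd j'
        omega
    | true =>
        obtain ⟨hd, _⟩ := hup1 t hy
        have hd' : dist (m+1) j' = dist m j' := hd j'
        omega
  have hdmono : ∀ (j' : Fin n) (m m' : ℕ), m ≤ m' → m' ≤ T → dist m j' ≤ dist m' j' := by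
    intro j' m m' hmm
    induction m', hmm using Nat.le_induction with
    | base => intro _; exact le_rfl
    | succ m' hmm ih =>
        intro h
        exact le_trans (ih (by omega)) (hdstep m' (by omega) j')
  -- the per-round facts on S1 rounds
  have hS1dist : ∀ t : Fin T, yhat t = false → y t = true → p t j = true →
      (dist t.val j : ℝ) * η < Real.logb 2 L ∧ dist t.val j < dist (t.val+1) j := by
    intro t hyf hyt hp
    have hjV : j ∈ V t.val := (hinv t.val (le_of_lt t.isLt)).1
    have hnot : ¬ L ≤ ∑ j' ∈ (V t.val).filter (fun j' => p t j' = true),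
        (2 : ℝ) ^ ((kb t.val j' : ℝ) + η * dist t.val j') := by
      intro h
      have := (hyhat t).mpr h
      rw [hyf] at this
      exact Bool.false_ne_true this
    have hterm : (2:ℝ) ^ ((kb t.val j : ℝ) + η * dist t.val j)
        ≤ ∑ j' ∈ (V t.val).filter (fun j' => p t j' = true),
            (2 : ℝ) ^ ((kb t.val j' : ℝ) + η * dist t.val j') :=
      Finset.single_le_sum (fun i _ => (hpos t.val i).le) (mem_filter.mpr ⟨hjV, hp⟩)
    have hlow : (2:ℝ) ^ (η * dist t.val j) ≤ (2:ℝ) ^ ((kb t.val j : ℝ) + η * dist t.val j) := by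
      apply (Real.rpow_le_rpow_left_iff (by norm_num : (1:ℝ) < 2)).mpr
      have : (0:ℝ) ≤ (kb t.val j : ℝ) := Nat.cast_nonneg _
      linarith
    have hlt : (2:ℝ) ^ (η * dist t.val j) < L := by
      push_neg at hnot; linarith
    have hlog : η * dist t.val j < Real.logb 2 L := by
      have h1 := Real.logb_lt_logb (b := 2) (by norm_num)
        (Real.rpow_pos_of_pos (by norm_num) _) hlt
      rwa [Real.logb_rpow (by norm_num) (by norm_num)] at h1
    constructor
    · linarith [mul_comm (dist t.val j : ℝ) η]
    · obtain ⟨_, _, hd⟩ := hup0 t hyf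
      have := hd j
      rw [if_pos hp] at this
      omega
  -- split FN into rounds where j predicts 1 resp. 0
  have hlogpos : 0 < Real.logb 2 L := Real.logb_pos (by norm_num) hL
  set x : ℝ := Real.logb 2 L / η with hx
  have hx0 : 0 ≤ x := le_of_lt (div_pos hlogpos hη0)
  set S1 := univ.filter (fun t : Fin T => (yhat t = false ∧ y t = true) ∧ p t j = true) with hS1
  set S2 := univ.filter (fun t : Fin T => (yhat t = false ∧ y t = true) ∧ ¬ p t j = true) with hS2def
  have hFN : (univ.filter (fun t : Fin T => yhat t = false ∧ y t = true)).card
      ≤ S1.card + S2.card := by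
    refine le_trans (card_le_card ?_) (card_union_le _ _)
    intro t ht
    simp only [hS1, hS2def, mem_union, mem_filter, mem_univ, true_and] at ht ⊢
    by_cases hp : p t j = true
    · exact Or.inl ⟨ht, hp⟩
    · exact Or.inr ⟨ht, hp⟩
  have hS2k : S2.card ≤ k := by
    refine le_trans (card_le_card ?_) hj
    intro t ht
    simp only [hS2def, mem_filter, mem_univ, true_and] at ht ⊢
    intro hpe
    rw [hpe] at ht
    exact ht.2 ht.1.2
  have hS1card : S1.card ≤ Nat.floor x + 1 := by
    rw [← Finset.card_range (Nat.floor x + 1)]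
    refine Finset.card_le_card_of_injOn (fun t : Fin T => dist t.val j)
      (t := Finset.range (Nat.floor x + 1)) ?_ ?_
    · intro t ht
      simp only [hS1, mem_coe, mem_filter, mem_univ, true_and] at ht
      obtain ⟨⟨h1, h2⟩, h3⟩ := ht
      have := (hS1dist t h1 h2 h3).1
      rw [mem_coe, mem_range, Nat.lt_succ_iff]
      apply Nat.le_floor
      rw [hx, le_div_iff₀ hη0]
      linarith
    · intro a ha b hb hab
      simp only [hS1, coe_filter, Set.mem_setOf_eq, mem_coe, mem_univ, true_and] at ha hb
      by_contra hne
      have key : ∀ c d : Fin T, ((yhat c = false ∧ y c = true) ∧ p c j = true) →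
          ((yhat d = false ∧ y d = true) ∧ p d j = true) → c < d →
          dist c.val j < dist d.val j := by
        intro c d hc hd hcd
        have h1 := (hS1dist c hc.1.1 hc.1.2 hc.2).2
        have h2 : dist (c.val+1) j ≤ dist d.val j :=
          hdmono j _ _ (by omega) (le_of_lt d.isLt)
        omega
      rcases lt_or_gt_of_ne hne with h | h
      · exact absurd hab (Nat.ne_of_lt (key a b ha hb h))
      · exact absurd hab.symm (Nat.ne_of_lt (key b a hb ha h))
  calc ((univ.filter (fun t : Fin T => yhat t = false ∧ y t = true)).card : ℝ)
      ≤ (S1.card : ℝ) + S2.card := by exact_mod_cast hFN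
    _ ≤ ((Nat.floor x + 1 : ℕ) : ℝ) + k := by
        have h1 : (S1.card : ℝ) ≤ ((Nat.floor x + 1 : ℕ) : ℝ) := by exact_mod_cast hS1card
        have h2 : (S2.card : ℝ) ≤ (k : ℝ) := by exact_mod_cast hS2k
        linarith
    _ ≤ Real.logb 2 L / η + k + 1 := by
        push_cast
        have := Nat.floor_le hx0
        rw [hx] at this
        linarith

theorem partB
    (n T k : ℕ) (η L : ℝ) (hη : η ∈ Set.Ioo (0 : ℝ) 1) (hL : 1 < L)
    (hn : (n : ℝ) ≤ η * L * T / 2 ^ (k + 1))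
    (p : Fin T → Fin n → Bool) (y : Fin T → Bool)
    (V : ℕ → Finset (Fin n)) (dist : ℕ → Fin n → ℕ) (kb : ℕ → Fin n → ℕ)
    (hV0 : V 0 = Finset.univ) (hdist0 : ∀ j, dist 0 j = 0) (hkb0 : ∀ j, kb 0 j = k)
    (yhat : Fin T → Bool)
    (hyhat : ∀ t : Fin T, yhat t = true ↔
      L ≤ ∑ j ∈ (V t.val).filter (fun j => p t j = true),
            (2 : ℝ) ^ ((kb t.val j : ℝ) + η * dist t.val j))
    (hup1 : ∀ t : Fin T, yhat t = true →
      (∀ j, dist (t.val + 1) j = dist t.val j) ∧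
      (if y t = true then
          V (t.val + 1) = V t.val ∧ ∀ j, kb (t.val + 1) j = kb t.val j
        else
          V (t.val + 1) =
            (V t.val).filter (fun j => ¬(p t j = true ∧ kb t.val j = 0)) ∧
          ∀ j, kb (t.val + 1) j = kb t.val j - (if p t j = true then 1 else 0)))
    (hup0 : ∀ t : Fin T, yhat t = false →
      V (t.val + 1) = V t.val ∧ (∀ j, kb (t.val + 1) j = kb t.val j) ∧
      ∀ j, dist (t.val + 1) j = dist t.val j + (if p t j = true then 1 else 0)) :
    ((Finset.univ.filter (fun t : Fin T => yhat t = true ∧ y t = false)).card : ℝ)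
        ≤ 200 * η * T := by
  obtain ⟨hη0, hη1⟩ := hη
  have hL0 : (0:ℝ) < L := by linarith
  have hpos : ∀ m (j' : Fin n), (0:ℝ) < (2:ℝ) ^ ((kb m j' : ℝ) + η * dist m j') :=
    fun m j' => Real.rpow_pos_of_pos (by norm_num) _
  set W : ℕ → ℝ := fun m => ∑ j' ∈ V m, (2:ℝ) ^ ((kb m j' : ℝ) + η * dist m j') with hW
  -- step when predicting 0
  have hstep0 : ∀ t : Fin T, yhat t = false → W (t.val+1) ≤ W t.val + η * L := by
    intro t hy
    obtain ⟨hV', hkb', hd'⟩ := hup0 t hy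
    set S1 := ∑ j' ∈ (V t.val).filter (fun j' => p t j' = true),
        (2:ℝ) ^ ((kb t.val j' : ℝ) + η * dist t.val j') with hS1def
    set S0 := ∑ j' ∈ (V t.val).filter (fun j' => ¬ p t j' = true),
        (2:ℝ) ^ ((kb t.val j' : ℝ) + η * dist t.val j') with hS0def
    have hS1L : S1 < L := by
      by_contra h
      push_neg at h
      have := (hyhat t).mpr h
      rw [hy] at this
      exact Bool.false_ne_true this
    have hS1nn : 0 ≤ S1 := sum_nonneg fun i _ => (hpos _ _).le
    have e1 : W (t.val+1) = ∑ j' ∈ V t.val,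
        (2:ℝ) ^ (((kb t.val j' : ℝ) + η * dist t.val j')
            + (if p t j' = true then η else 0)) := by
      rw [hW]
      simp only
      rw [hV']
      refine Finset.sum_congr rfl fun j' _ => ?_
      congr 1
      rw [hkb' j', hd' j']
      push_cast [apply_ite (Nat.cast : ℕ → ℝ)]
      split_ifs <;> ring
    have e2 : W (t.val+1) = S1 * (2:ℝ) ^ η + S0 := by
      rw [e1, ← Finset.sum_filter_add_sum_filter_not (V t.val) (fun j' => p t j' = true)]
      congr 1
      · rw [hS1def, Finset.sum_mul]
        refine Finset.sum_congr rfl fun j' hj' => ?_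
        rw [if_pos (mem_filter.mp hj').2, Real.rpow_add (by norm_num)]
      · rw [hS0def]
        refine Finset.sum_congr rfl fun j' hj' => ?_
        rw [if_neg (mem_filter.mp hj').2, add_zero]
    have e3 : W t.val = S1 + S0 := by
      rw [hW, hS1def, hS0def]
      simp only
      rw [Finset.sum_filter_add_sum_filter_not]
    have h2eta : (2:ℝ) ^ η ≤ 1 + η := two_rpow_le_one_add' hη0.le hη1.le
    nlinarith [mul_le_mul_of_nonneg_left h2eta hS1nn]
  -- step on true positives
  have hstep1' : ∀ t : Fin T, yhat t = true → y t = true → W (t.val+1) = W t.val := by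
    intro t hy hyy
    obtain ⟨hd', hrest⟩ := hup1 t hy
    rw [hyy, if_pos rfl] at hrest
    obtain ⟨hV', hkb'⟩ := hrest
    rw [hW]
    simp only
    rw [hV']
    exact Finset.sum_congr rfl fun j' _ => by rw [hkb' j', hd' j']
  -- step on false positives
  have hstep1 : ∀ t : Fin T, yhat t = true → y t = false → W (t.val+1) ≤ W t.val - L / 2 := by
    intro t hy hyy
    obtain ⟨hd', hrest⟩ := hup1 t hy
    rw [hyy, if_neg (by simp)] at hrest
    obtain ⟨hV', hkb'⟩ := hrest
    set S1 := ∑ j' ∈ (V t.val).filter (fun j' => p t j' = true),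
        (2:ℝ) ^ ((kb t.val j' : ℝ) + η * dist t.val j') with hS1def
    set S0 := ∑ j' ∈ (V t.val).filter (fun j' => ¬ p t j' = true),
        (2:ℝ) ^ ((kb t.val j' : ℝ) + η * dist t.val j') with hS0def
    have hS1L : L ≤ S1 := (hyhat t).mp hy
    have e3 : W t.val = S1 + S0 := by
      rw [hW, hS1def, hS0def]
      simp only
      rw [Finset.sum_filter_add_sum_filter_not]
    -- split the new sum
    have esplit : W (t.val+1)
        = (∑ j' ∈ (V (t.val+1)).filter (fun j' => p t j' = true),
            (2:ℝ) ^ ((kb (t.val+1) j' : ℝ) + η * dist (t.val+1) j'))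
          + ∑ j' ∈ (V (t.val+1)).filter (fun j' => ¬ p t j' = true),
            (2:ℝ) ^ ((kb (t.val+1) j' : ℝ) + η * dist (t.val+1) j') := by
      rw [hW]
      simp only
      rw [Finset.sum_filter_add_sum_filter_not]
    have hsub : V (t.val+1) ⊆ V t.val := by
      rw [hV']; exact filter_subset _ _
    have hA : ∑ j' ∈ (V (t.val+1)).filter (fun j' => p t j' = true),
        (2:ℝ) ^ ((kb (t.val+1) j' : ℝ) + η * dist (t.val+1) j') ≤ S1 / 2 := by
      have eA : ∀ j' ∈ (V (t.val+1)).filter (fun j' => p t j' = true),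
          (2:ℝ) ^ ((kb (t.val+1) j' : ℝ) + η * dist (t.val+1) j')
            = (2:ℝ) ^ ((kb t.val j' : ℝ) + η * dist t.val j') / 2 := by
        intro j' hj'
        obtain ⟨hmem, hp⟩ := mem_filter.mp hj'
        have hkb1 : 1 ≤ kb t.val j' := by
          rw [hV'] at hmem
          have h2 := (mem_filter.mp hmem).2
          by_contra h
          exact h2 ⟨hp, by omega⟩
        have hkbe : kb (t.val+1) j' = kb t.val j' - 1 := by
          rw [hkb' j', if_pos hp]
        rw [hkbe, hd' j', Nat.cast_sub hkb1, Nat.cast_one]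
        rw [show ((kb t.val j' : ℝ) - 1) + η * dist t.val j'
            = ((kb t.val j' : ℝ) + η * dist t.val j') - 1 by ring]
        rw [Real.rpow_sub (by norm_num), Real.rpow_one]
      rw [Finset.sum_congr rfl eA, ← Finset.sum_div]
      have hle : ∑ j' ∈ (V (t.val+1)).filter (fun j' => p t j' = true),
          (2:ℝ) ^ ((kb t.val j' : ℝ) + η * dist t.val j') ≤ S1 := by
        apply Finset.sum_le_sum_of_subset_of_nonneg
          (filter_subset_filter _ hsub)
        exact fun i _ _ => (hpos _ _).le
      linarith
    have hB : ∑ j' ∈ (V (t.val+1)).filter (fun j' => ¬ p t j' = true),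
        (2:ℝ) ^ ((kb (t.val+1) j' : ℝ) + η * dist (t.val+1) j') ≤ S0 := by
      have eB : ∀ j' ∈ (V (t.val+1)).filter (fun j' => ¬ p t j' = true),
          (2:ℝ) ^ ((kb (t.val+1) j' : ℝ) + η * dist (t.val+1) j')
            = (2:ℝ) ^ ((kb t.val j' : ℝ) + η * dist t.val j') := by
        intro j' hj'
        obtain ⟨hmem, hp⟩ := mem_filter.mp hj'
        have hkbe : kb (t.val+1) j' = kb t.val j' := by
          rw [hkb' j', if_neg hp, Nat.sub_zero]
        rw [hkbe, hd' j']
      rw [Finset.sum_congr rfl eB]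
      apply Finset.sum_le_sum_of_subset_of_nonneg
        (filter_subset_filter _ hsub)
      exact fun i _ _ => (hpos _ _).le
    rw [esplit, e3]
    linarith
  -- potential induction
  have hWind : ∀ m, m ≤ T →
      W m + (L/2) * ((univ.filter (fun t : Fin T =>
          t.val < m ∧ (yhat t = true ∧ y t = false))).card : ℝ)
        ≤ W 0 + η * L * m := by
    intro m
    induction m with
    | zero => intro _; simp
    | succ m ih =>
        intro hm
        have hmT : m < T := hm
        have hih := ih (le_of_lt hmT)
        set t : Fin T := ⟨m, hmT⟩ with hts
        have hcard := card_filter_succ' (fun t : Fin T => yhat t = true ∧ y t = false) m hmT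
        have hrec : ((univ.filter (fun t : Fin T =>
            t.val < m + 1 ∧ (yhat t = true ∧ y t = false))).card : ℝ)
            = ((univ.filter (fun t : Fin T =>
                t.val < m ∧ (yhat t = true ∧ y t = false))).card : ℝ)
              + (if yhat t = true ∧ y t = false then 1 else 0) := by
          rw [hcard]
          push_cast [apply_ite (Nat.cast : ℕ → ℝ)]
          ring
        have hcast : η * L * ((m:ℝ) + 1) = η * L * m + η * L := by ring
        have hηL : 0 < η * L := mul_pos hη0 hL0
        cases hy : yhat t with
        | false =>
            have hs := hstep0 t hy
            rw [hrec, if_neg (by simp [hy])]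
            push_cast
            rw [hcast]
            have : W (m+1) ≤ W m + η * L := hs
            linarith
        | true =>
            cases hyy : y t with
            | true =>
                have hs : W (m+1) = W m := hstep1' t hy hyy
                rw [hrec, if_neg (by simp [hyy])]
                push_cast
                rw [hcast]
                linarith
            | false =>
                have hs : W (m+1) ≤ W m - L/2 := hstep1 t hy hyy
                rw [hrec, if_pos ⟨hy, hyy⟩]
                push_cast
                rw [hcast]
                linarith
  -- conclude
  have hWT := hWind T le_rfl
  have hW0 : W 0 = (n : ℝ) * 2 ^ k := by
    rw [hW]
    simp only
    rw [hV0]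
    have hexp : ∀ j' : Fin n, ((kb 0 j' : ℝ) + η * dist 0 j') = (k : ℝ) := fun j' => by
      rw [hkb0 j', hdist0 j']
      push_cast
      ring
    calc (∑ j' ∈ (univ : Finset (Fin n)), (2:ℝ) ^ ((kb 0 j' : ℝ) + η * dist 0 j'))
        = ∑ _j' ∈ (univ : Finset (Fin n)), (2:ℝ) ^ (k:ℝ) :=
          Finset.sum_congr rfl fun j' _ => by rw [hexp j']
      _ = (n : ℝ) * 2 ^ k := by
          rw [Finset.sum_const, card_univ, Fintype.card_fin, nsmul_eq_mul,
            Real.rpow_natCast]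
  have hWTnn : 0 ≤ W T := sum_nonneg fun i _ => (hpos _ _).le
  have hfilterT : (univ.filter (fun t : Fin T =>
      t.val < T ∧ (yhat t = true ∧ y t = false)))
      = univ.filter (fun t : Fin T => yhat t = true ∧ y t = false) := by
    apply filter_congr
    intro t _
    simp [t.isLt]
  rw [hfilterT, hW0] at hWT
  have hnk : (n:ℝ) * 2 ^ k ≤ η * L * T / 2 := by
    have h1 := mul_le_mul_of_nonneg_right hn (by positivity : (0:ℝ) ≤ 2 ^ k)
    calc (n:ℝ) * 2 ^ k ≤ η * L * T / 2 ^ (k+1) * 2 ^ k := h1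
      _ = η * L * T / 2 := by
          rw [pow_succ]
          field_simp
  set M : ℝ := ((univ.filter (fun t : Fin T => yhat t = true ∧ y t = false)).card : ℝ)
    with hM
  have hMnn : 0 ≤ M := Nat.cast_nonneg _
  have hM3 : M ≤ 3 * η * T := by
    nlinarith
  have hηT : 0 ≤ η * T := by positivity
  linarith

end ExpATAux


/-- Mistake bounds of `ExpAT` (agnostic case). State: version space `V`, distances `dist`,
false-positive budgets `kb` (initially `k`), predictions `yhat` (predict `1` iff the total
weight `2^{budget + η·distance}` of alive experts predicting `1` reaches the threshold `L`).
On a `k`-realizable sequence, under `η ∈ (0,1)`, `L > 1` and `n ≤ ηLT/2^{k+1}`, the number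
of false negatives is at most `log₂ L / η + k + 1` and the number of false positives is at
most `200ηT`. -/
theorem expAT_mistake_bounds
    (n T k : ℕ) (η L : ℝ) (hη : η ∈ Set.Ioo (0 : ℝ) 1) (hL : 1 < L)
    (hn : (n : ℝ) ≤ η * L * T / 2 ^ (k + 1))
    (p : Fin T → Fin n → Bool) (y : Fin T → Bool)
    (hkreal : ∃ j : Fin n,
      (Finset.univ.filter (fun t : Fin T => p t j ≠ y t)).card ≤ k)
    (V : ℕ → Finset (Fin n)) (dist : ℕ → Fin n → ℕ) (kb : ℕ → Fin n → ℕ)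
    (hV0 : V 0 = Finset.univ) (hdist0 : ∀ j, dist 0 j = 0) (hkb0 : ∀ j, kb 0 j = k)
    (yhat : Fin T → Bool)
    (hyhat : ∀ t : Fin T, yhat t = true ↔
      L ≤ ∑ j ∈ (V t.val).filter (fun j => p t j = true),
            (2 : ℝ) ^ ((kb t.val j : ℝ) + η * dist t.val j))
    (hup1 : ∀ t : Fin T, yhat t = true →
      (∀ j, dist (t.val + 1) j = dist t.val j) ∧
      (if y t = true then
          V (t.val + 1) = V t.val ∧ ∀ j, kb (t.val + 1) j = kb t.val j
        else
          V (t.val + 1) =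
            (V t.val).filter (fun j => ¬(p t j = true ∧ kb t.val j = 0)) ∧
          ∀ j, kb (t.val + 1) j = kb t.val j - (if p t j = true then 1 else 0)))
    (hup0 : ∀ t : Fin T, yhat t = false →
      V (t.val + 1) = V t.val ∧ (∀ j, kb (t.val + 1) j = kb t.val j) ∧
      ∀ j, dist (t.val + 1) j = dist t.val j + (if p t j = true then 1 else 0)) :
    ((Finset.univ.filter (fun t : Fin T => yhat t = false ∧ y t = true)).card : ℝ)
        ≤ Real.logb 2 L / η + k + 1 ∧
    ((Finset.univ.filter (fun t : Fin T => yhat t = true ∧ y t = false)).card : ℝ)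
        ≤ 200 * η * T := by
  exact ⟨partA n T k η L hη hL p y hkreal V dist kb hV0 hdist0 hkb0 yhat hyhat hup1 hup0,
    partB n T k η L hη hL hn p y V dist kb hV0 hdist0 hkb0 yhat hyhat hup1 hup0⟩
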